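/- Let p be a prime and k > 4 an even integer. For nonnegative integers a' ≤ a ≤ a' + 2s (s ≥ 1 fixed) and χ, χ' ∈ {-1,0,1}, consider sequences F_j = F(a, b_j, χ) and F'_j = F(a', b_j - s, χ) of local Siegel series values, where b_j → ∞. Then F'_j / F_j → p^{s(3-2k)} · (1 - p^{(2-k)(a'+1)}) / (1 - p^{(2-k)(a+1)}) as j → ∞. -/

import Mathlib

open scoped BigOperators

/-- The local Siegel series `F_p(T, 3-k)` evaluated combinatorially:
`F(a,b,χ) = ∑_{ℓ=0}^{a} p^{ℓ(k-1)} ( ∑_{w=0}^{b-ℓ} p^{w(2k-3)} - χ p^{k-2} ∑_{w=0}^{b-ℓ-1} p^{w(2k-3)} )`,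
where sums with negative upper index are zero. -/
def siegelF (p k a b : ℕ) (χ : ℤ) : ℤ :=
  ∑ ℓ ∈ Finset.range (a + 1),
    if ℓ ≤ b then
      (p : ℤ) ^ (ℓ * (k - 1)) *
        ((∑ w ∈ Finset.range (b - ℓ + 1), (p : ℤ) ^ (w * (2 * k - 3))) -
          χ * (p : ℤ) ^ (k - 2) * ∑ w ∈ Finset.range (b - ℓ), (p : ℤ) ^ (w * (2 * k - 3)))
    else 0

open Filter

/-- If `b_j → ∞`, then the ratios `F(a', b_j - s, χ)/F(a, b_j, χ)` of local Siegel
series values converge to the special limit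
`p^{s(3-2k)} (1-p^{(2-k)(a'+1)})/(1-p^{(2-k)(a+1)})`. -/
lemma siegel_closed (p k : ℕ) (hp : 2 ≤ p) (hk : 4 < k) (χ : ℤ) (a b : ℕ) (hab : a ≤ b) :
    (siegelF p k a b χ : ℝ) =
      ((p:ℝ)^(2*k-3))^b *
        ((((p:ℝ)^(2*k-3) - χ*(p:ℝ)^(k-2)) / ((p:ℝ)^(2*k-3) - 1)) *
          ∑ ℓ ∈ Finset.range (a+1), ((p:ℝ)^(k-1) / (p:ℝ)^(2*k-3))^ℓ)
      + ((χ*(p:ℝ)^(k-2) - 1) / ((p:ℝ)^(2*k-3) - 1)) *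
          ∑ ℓ ∈ Finset.range (a+1), ((p:ℝ)^(k-1))^ℓ := by
  have hq1 : (1:ℝ) < (p:ℝ) := by exact_mod_cast hp
  have hA1 : (1:ℝ) < (p:ℝ)^(2*k-3) := one_lt_pow₀ hq1 (by omega)
  have hAne1 : ((p:ℝ)^(2*k-3)) ≠ 1 := ne_of_gt hA1
  have hAne0 : ((p:ℝ)^(2*k-3)) ≠ 0 := by positivity
  have hA1ne : ((p:ℝ)^(2*k-3)) - 1 ≠ 0 := sub_ne_zero.mpr hAne1
  rw [show ((p:ℝ)^(2*k-3))^b *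
        ((((p:ℝ)^(2*k-3) - χ*(p:ℝ)^(k-2)) / ((p:ℝ)^(2*k-3) - 1)) *
          ∑ ℓ ∈ Finset.range (a+1), ((p:ℝ)^(k-1) / (p:ℝ)^(2*k-3))^ℓ)
      + ((χ*(p:ℝ)^(k-2) - 1) / ((p:ℝ)^(2*k-3) - 1)) *
          ∑ ℓ ∈ Finset.range (a+1), ((p:ℝ)^(k-1))^ℓ
      = ∑ ℓ ∈ Finset.range (a+1),
          (((p:ℝ)^(2*k-3))^b *
            ((((p:ℝ)^(2*k-3) - χ*(p:ℝ)^(k-2)) / ((p:ℝ)^(2*k-3) - 1)) *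
              ((p:ℝ)^(k-1) / (p:ℝ)^(2*k-3))^ℓ)
           + ((χ*(p:ℝ)^(k-2) - 1) / ((p:ℝ)^(2*k-3) - 1)) * ((p:ℝ)^(k-1))^ℓ) by
    rw [Finset.sum_add_distrib, ← Finset.mul_sum, ← Finset.mul_sum, ← Finset.mul_sum]]
  simp only [siegelF]
  push_cast
  refine Finset.sum_congr rfl ?_
  intro ℓ hℓ
  have hℓb : ℓ ≤ b := le_trans (Nat.lt_succ_iff.mp (Finset.mem_range.mp hℓ)) hab
  rw [if_pos hℓb]
  simp only [pow_mul']
  rw [geom_sum_eq hAne1, geom_sum_eq hAne1]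
  have key : ((p:ℝ)^(2*k-3))^(b-ℓ) * ((p:ℝ)^(2*k-3))^ℓ = ((p:ℝ)^(2*k-3))^b :=
    pow_sub_mul_pow _ hℓb
  rw [← key]
  field_simp
  have hρ : ((p:ℝ)^(2*k-3))^ℓ * ((p:ℝ)^(k-1)/(p:ℝ)^(2*k-3))^ℓ = ((p:ℝ)^(k-1))^ℓ := by
    rw [← mul_pow, mul_div_cancel₀ _ hAne0]
  linear_combination (-(((p:ℝ)^(2*k-3))^(b-ℓ) * ((p:ℝ)^(2*k-3) - χ*(p:ℝ)^(k-2)))) * hρ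

lemma aux_val (u D x x' r : ℝ) (hD : D ≠ 0) (hr : r - 1 ≠ 0) (hx : 1 - x ≠ 0) :
    u * (D * ((x' - 1)/(r - 1))) / (D * ((x - 1)/(r - 1))) = u * (1 - x') / (1 - x) := by
  have hx' : x - 1 ≠ 0 := fun h => hx (by linarith [sub_eq_zero.mp h])
  field_simp
  ring

lemma aux_tendsto (A Ka ca Ka' ca' : ℝ) (hA1 : 1 < A) (hKa : Ka ≠ 0) (s : ℕ)
    (b : ℕ → ℕ) (hb : Tendsto b atTop atTop) (f : ℕ → ℝ)
    (hf : ∀ᶠ j in atTop, f j = (A^(b j - s) * Ka' + ca')/(A^(b j) * Ka + ca)) :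
    Tendsto f atTop (nhds ((A⁻¹)^s * Ka' / Ka)) := by
  have hA0 : (0:ℝ) < A := lt_trans one_pos hA1
  have hAne : A ≠ 0 := ne_of_gt hA0
  have hu0 : (0:ℝ) ≤ A⁻¹ := by positivity
  have hu1 : A⁻¹ < 1 := inv_lt_one_of_one_lt₀ hA1
  have h0 : Tendsto (fun j => (A⁻¹)^(b j)) atTop (nhds 0) :=
    (tendsto_pow_atTop_nhds_zero_of_lt_one hu0 hu1).comp hb
  have hlim : Tendsto
      (fun j => ((A⁻¹)^s*Ka' + ca'*(A⁻¹)^(b j)) / (Ka + ca*(A⁻¹)^(b j))) atTop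
      (nhds (((A⁻¹)^s*Ka' + ca'*0)/(Ka + ca*0))) :=
    Tendsto.div (tendsto_const_nhds.add (tendsto_const_nhds.mul h0))
      (tendsto_const_nhds.add (tendsto_const_nhds.mul h0)) (by simpa using hKa)
  simp only [mul_zero, add_zero] at hlim
  refine Tendsto.congr' ?_ hlim
  filter_upwards [hf, hb.eventually (eventually_ge_atTop s)] with j hj hjs
  rw [hj]
  set N := b j with hN
  have e1 : A^(N-s) * A^s = A^N := pow_sub_mul_pow A hjs
  have huN : ((A⁻¹)^N : ℝ) ≠ 0 := by positivity
  have e2 : (A⁻¹)^N * A^(N-s) = (A⁻¹)^s := by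
    rw [inv_pow, inv_pow]
    field_simp
    linear_combination e1
  have e3 : (A⁻¹)^N * A^N = 1 := by rw [inv_pow]; field_simp
  rw [show (A^(N-s) * Ka' + ca')/(A^N * Ka + ca)
      = ((A⁻¹)^N * (A^(N-s) * Ka' + ca'))/((A⁻¹)^N * (A^N * Ka + ca)) from
      (mul_div_mul_left _ _ huN).symm]
  congr 1
  · rw [mul_add, ← mul_assoc, e2]; ring
  · rw [mul_add, ← mul_assoc, e3]; ring

theorem stmt16 (p k s a a' : ℕ) (hp : p.Prime) (hk : Even k) (hk4 : 4 < k)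
    (hs : 0 < s) (ha' : a' ≤ a) (ha : a ≤ a' + 2 * s)
    (χ : ℤ) (hχ : χ = -1 ∨ χ = 0 ∨ χ = 1)
    (b : ℕ → ℕ) (hb : Tendsto b atTop atTop) :
    Tendsto (fun j : ℕ => (siegelF p k a' (b j - s) χ : ℝ) / (siegelF p k a (b j) χ : ℝ))
      atTop
      (nhds ((p : ℝ) ^ ((s : ℤ) * (3 - 2 * (k : ℤ))) *
        (1 - (p : ℝ) ^ ((2 - (k : ℤ)) * ((a' : ℤ) + 1))) /
        (1 - (p : ℝ) ^ ((2 - (k : ℤ)) * ((a : ℤ) + 1))))) := by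
  have hp2 : 2 ≤ p := hp.two_le
  have hq1 : (1:ℝ) < (p:ℝ) := by exact_mod_cast hp2
  have hq0 : (0:ℝ) < (p:ℝ) := by positivity
  have hA1 : (1:ℝ) < (p:ℝ)^(2*k-3) := one_lt_pow₀ hq1 (by omega)
  have hA0 : (0:ℝ) < (p:ℝ)^(2*k-3) := by positivity
  have ht1 : (1:ℝ) < (p:ℝ)^(k-2) := one_lt_pow₀ hq1 (by omega)
  have hρeq : (p:ℝ)^(k-1) / (p:ℝ)^(2*k-3) = ((p:ℝ)^(k-2))⁻¹ := by
    rw [show 2*k-3 = (k-1) + (k-2) from by omega, pow_add, ← div_div,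
      div_self (by positivity : ((p:ℝ)^(k-1)) ≠ 0), one_div]
  have hρ0 : 0 < (p:ℝ)^(k-1) / (p:ℝ)^(2*k-3) := by positivity
  have hρ1 : (p:ℝ)^(k-1) / (p:ℝ)^(2*k-3) < 1 := by
    rw [hρeq]; exact inv_lt_one_of_one_lt₀ ht1
  have hlt : (p:ℝ)^(k-2) < (p:ℝ)^(2*k-3) := by
    apply pow_lt_pow_right₀ hq1 (by omega)
  have ht0 : (0:ℝ) < (p:ℝ)^(k-2) := by positivity
  have hNum : 0 < (p:ℝ)^(2*k-3) - χ*(p:ℝ)^(k-2) := by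
    rcases hχ with h|h|h <;> subst h <;> push_cast <;> nlinarith
  have hD0 : 0 < ((p:ℝ)^(2*k-3) - χ*(p:ℝ)^(k-2)) / ((p:ℝ)^(2*k-3) - 1) :=
    div_pos hNum (by linarith)
  have hSa0 : 0 < ∑ ℓ ∈ Finset.range (a+1), ((p:ℝ)^(k-1) / (p:ℝ)^(2*k-3))^ℓ :=
    Finset.sum_pos (fun i _ => pow_pos hρ0 i) (Finset.nonempty_range_iff.mpr (by omega))
  have hKane : (((p:ℝ)^(2*k-3) - χ*(p:ℝ)^(k-2)) / ((p:ℝ)^(2*k-3) - 1)) *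
      (∑ ℓ ∈ Finset.range (a+1), ((p:ℝ)^(k-1) / (p:ℝ)^(2*k-3))^ℓ) ≠ 0 :=
    (mul_pos hD0 hSa0).ne'
  have hf : ∀ᶠ j in atTop,
      (siegelF p k a' (b j - s) χ : ℝ) / (siegelF p k a (b j) χ : ℝ)
      = (((p:ℝ)^(2*k-3))^(b j - s) *
          ((((p:ℝ)^(2*k-3) - χ*(p:ℝ)^(k-2)) / ((p:ℝ)^(2*k-3) - 1)) *
            ∑ ℓ ∈ Finset.range (a'+1), ((p:ℝ)^(k-1) / (p:ℝ)^(2*k-3))^ℓ)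
         + ((χ*(p:ℝ)^(k-2) - 1) / ((p:ℝ)^(2*k-3) - 1)) *
            ∑ ℓ ∈ Finset.range (a'+1), ((p:ℝ)^(k-1))^ℓ)
        / (((p:ℝ)^(2*k-3))^(b j) *
          ((((p:ℝ)^(2*k-3) - χ*(p:ℝ)^(k-2)) / ((p:ℝ)^(2*k-3) - 1)) *
            ∑ ℓ ∈ Finset.range (a+1), ((p:ℝ)^(k-1) / (p:ℝ)^(2*k-3))^ℓ)
         + ((χ*(p:ℝ)^(k-2) - 1) / ((p:ℝ)^(2*k-3) - 1)) *
            ∑ ℓ ∈ Finset.range (a+1), ((p:ℝ)^(k-1))^ℓ) := by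
    filter_upwards [hb.eventually (eventually_ge_atTop (a + s))] with j hj
    rw [siegel_closed p k hp2 hk4 χ a (b j) (by omega),
        siegel_closed p k hp2 hk4 χ a' (b j - s) (by omega)]
  have H := aux_tendsto ((p:ℝ)^(2*k-3))
    ((((p:ℝ)^(2*k-3) - χ*(p:ℝ)^(k-2)) / ((p:ℝ)^(2*k-3) - 1)) *
      ∑ ℓ ∈ Finset.range (a+1), ((p:ℝ)^(k-1) / (p:ℝ)^(2*k-3))^ℓ)
    (((χ*(p:ℝ)^(k-2) - 1) / ((p:ℝ)^(2*k-3) - 1)) *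
      ∑ ℓ ∈ Finset.range (a+1), ((p:ℝ)^(k-1))^ℓ)
    ((((p:ℝ)^(2*k-3) - χ*(p:ℝ)^(k-2)) / ((p:ℝ)^(2*k-3) - 1)) *
      ∑ ℓ ∈ Finset.range (a'+1), ((p:ℝ)^(k-1) / (p:ℝ)^(2*k-3))^ℓ)
    (((χ*(p:ℝ)^(k-2) - 1) / ((p:ℝ)^(2*k-3) - 1)) *
      ∑ ℓ ∈ Finset.range (a'+1), ((p:ℝ)^(k-1))^ℓ)
    hA1 hKane s b hb _ hf
  have hm1 : ((2*k-3:ℕ):ℤ) = 2*(k:ℤ)-3 := by omega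
  have hm2 : ((k-2:ℕ):ℤ) = (k:ℤ)-2 := by omega
  have hz1 : (p:ℝ)^((s:ℤ)*(3-2*(k:ℤ))) = (((p:ℝ)^(2*k-3))⁻¹)^s := by
    have h1 : (s:ℤ)*(3-2*(k:ℤ)) = -(((2*k-3)*s : ℕ):ℤ) := by push_cast [hm1]; ring
    rw [h1, zpow_neg, zpow_natCast, pow_mul, ← inv_pow]
  have hz2 : ∀ c : ℕ, (p:ℝ)^((2-(k:ℤ))*((c:ℤ)+1))
      = ((p:ℝ)^(k-1)/(p:ℝ)^(2*k-3))^(c+1) := by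
    intro c
    have h1 : (2-(k:ℤ))*((c:ℤ)+1) = -(((k-2)*(c+1) : ℕ):ℤ) := by push_cast [hm2]; ring
    rw [h1, zpow_neg, zpow_natCast, pow_mul, ← inv_pow, ← hρeq]
  have hρne1 : (p:ℝ)^(k-1) / (p:ℝ)^(2*k-3) ≠ 1 := ne_of_lt hρ1
  have hρa : ((p:ℝ)^(k-1) / (p:ℝ)^(2*k-3))^(a+1) < 1 :=
    pow_lt_one₀ hρ0.le hρ1 (by omega)
  have hval : (((p:ℝ)^(2*k-3))⁻¹)^s *
      ((((p:ℝ)^(2*k-3) - χ*(p:ℝ)^(k-2)) / ((p:ℝ)^(2*k-3) - 1)) *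
        ∑ ℓ ∈ Finset.range (a'+1), ((p:ℝ)^(k-1) / (p:ℝ)^(2*k-3))^ℓ)
      / ((((p:ℝ)^(2*k-3) - χ*(p:ℝ)^(k-2)) / ((p:ℝ)^(2*k-3) - 1)) *
        ∑ ℓ ∈ Finset.range (a+1), ((p:ℝ)^(k-1) / (p:ℝ)^(2*k-3))^ℓ)
      = (p : ℝ) ^ ((s : ℤ) * (3 - 2 * (k : ℤ))) *
        (1 - (p : ℝ) ^ ((2 - (k : ℤ)) * ((a' : ℤ) + 1))) /
        (1 - (p : ℝ) ^ ((2 - (k : ℤ)) * ((a : ℤ) + 1))) := by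
    rw [geom_sum_eq hρne1, geom_sum_eq hρne1, hz1, hz2 a', hz2 a]
    exact aux_val _ _ _ _ _ (ne_of_gt hD0) (sub_ne_zero.mpr hρne1)
      (sub_ne_zero.mpr (ne_of_lt hρa).symm)
  rw [← hval]
  exact H
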